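/- Let γ, δ ⊆ {1,…,n} be subsets with |γ| = |δ|. Then the following are equivalent: (1) the vector χ_γ − χ_δ ∈ ℤⁿ is a linear combination with nonnegative integer coefficients of the vectors e_a − e_b with 1 ≤ a < b ≤ n (i.e. of the positive roots of GL_n); (2) there exists a bijection f : γ∖δ → δ∖γ such that a < f(a) for every a ∈ γ∖δ. -/

import Mathlib

/-- Let `γ, δ ⊆ {1,…,n}` (encoded as `Finset (Fin n)`) with `|γ| = |δ|`.  The following are
equivalent:
(1) the vector `χ_γ − χ_δ ∈ ℤⁿ` is a linear combination with nonnegative integer coefficients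
    of the vectors `e_a − e_b` with `a < b` (the positive roots of `GL_n`);
(2) there is a bijection `f : γ∖δ → δ∖γ` with `a < f a` for every `a ∈ γ∖δ`. -/
theorem indicator_difference_sum_of_positive_roots_iff
    (n : ℕ) (γ δ : Finset (Fin n)) (hcard : γ.card = δ.card) :
    (∃ c : Fin n → Fin n → ℕ, ∀ x : Fin n,
        ((if x ∈ γ then (1 : ℤ) else 0) - (if x ∈ δ then (1 : ℤ) else 0)) =
          ∑ a : Fin n, ∑ b : Fin n,
            if a < b then
              (c a b : ℤ) * ((if x = a then (1 : ℤ) else 0) - (if x = b then (1 : ℤ) else 0))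
            else 0) ↔
    (∃ f : Fin n → Fin n,
        Set.BijOn f ↑(γ \ δ) ↑(δ \ γ) ∧ ∀ a ∈ γ \ δ, a < f a) := by
  constructor
  · rintro ⟨c, hc⟩
    -- Step 1: prefix inequality on the original sets
    have key : ∀ k : Fin n, ((δ.filter (· ≤ k)).card : ℤ) ≤ ((γ.filter (· ≤ k)).card : ℤ) := by
      intro k
      have hsum : ∑ x ∈ Finset.univ.filter (· ≤ k),
          ((if x ∈ γ then (1 : ℤ) else 0) - (if x ∈ δ then (1 : ℤ) else 0))
          = ∑ x ∈ Finset.univ.filter (· ≤ k), ∑ a : Fin n, ∑ b : Fin n,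
            if a < b then
              (c a b : ℤ) * ((if x = a then (1 : ℤ) else 0) - (if x = b then (1 : ℤ) else 0))
            else 0 :=
        Finset.sum_congr rfl (fun x _ => hc x)
      have hL : ∑ x ∈ Finset.univ.filter (· ≤ k),
          ((if x ∈ γ then (1 : ℤ) else 0) - (if x ∈ δ then (1 : ℤ) else 0))
          = ((γ.filter (· ≤ k)).card : ℤ) - ((δ.filter (· ≤ k)).card : ℤ) := by
        rw [Finset.sum_sub_distrib, Finset.sum_boole, Finset.sum_boole]
        congr 3 <;> (ext x; simp [and_comm])
      have hR : 0 ≤ ∑ x ∈ Finset.univ.filter (· ≤ k), ∑ a : Fin n, ∑ b : Fin n,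
            if a < b then
              (c a b : ℤ) * ((if x = a then (1 : ℤ) else 0) - (if x = b then (1 : ℤ) else 0))
            else 0 := by
        rw [Finset.sum_comm]
        apply Finset.sum_nonneg; intro a _
        rw [Finset.sum_comm]
        apply Finset.sum_nonneg; intro b _
        by_cases hab : a < b
        · simp only [if_pos hab, ← Finset.mul_sum]
          apply mul_nonneg (Int.natCast_nonneg _)
          rw [Finset.sum_sub_distrib, Finset.sum_ite_eq', Finset.sum_ite_eq']
          have hba : b ∈ Finset.univ.filter (· ≤ k) → a ∈ Finset.univ.filter (· ≤ k) := by
            simp only [Finset.mem_filter, Finset.mem_univ, true_and]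
            exact fun hb => le_of_lt (lt_of_lt_of_le hab hb)
          split_ifs with h1 h2 <;> simp_all
        · simp [hab]
      rw [hL] at hsum
      omega
    -- Step 2: prefix inequality on the set differences
    have key2 : ∀ k : Fin n,
        ((δ \ γ).filter (· ≤ k)).card ≤ ((γ \ δ).filter (· ≤ k)).card := by
      intro k
      have h1 : (γ.filter (· ≤ k)).card
          = ((γ \ δ).filter (· ≤ k)).card + ((γ ∩ δ).filter (· ≤ k)).card := by
        rw [← Finset.card_union_of_disjoint
          (Finset.disjoint_filter_filter (Finset.disjoint_sdiff_inter γ δ)),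
          ← Finset.filter_union, Finset.sdiff_union_inter]
      have h2 : (δ.filter (· ≤ k)).card
          = ((δ \ γ).filter (· ≤ k)).card + ((γ ∩ δ).filter (· ≤ k)).card := by
        rw [Finset.inter_comm, ← Finset.card_union_of_disjoint
          (Finset.disjoint_filter_filter (Finset.disjoint_sdiff_inter δ γ)),
          ← Finset.filter_union, Finset.sdiff_union_inter]
      have := key k
      omega
    have hm : (δ \ γ).card = (γ \ δ).card := Finset.card_sdiff_comm hcard.symm
    set m := (γ \ δ).card with hmdef
    let g : Fin m ≃o ↥(γ \ δ) := (γ \ δ).orderIsoOfFin rfl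
    let d : Fin m ≃o ↥(δ \ γ) := (δ \ γ).orderIsoOfFin hm
    -- Step 3: the i-th element of γ\δ is strictly below the i-th element of δ\γ
    have key3 : ∀ i : Fin m, ((g i : Fin n)) < ((d i : Fin n)) := by
      intro i
      have hne : ((g i : Fin n)) ≠ ((d i : Fin n)) := by
        intro h
        have h1 : ((g i : Fin n)) ∈ γ \ δ := (g i).2
        have h2 : ((d i : Fin n)) ∈ δ \ γ := (d i).2
        rw [h] at h1
        simp only [Finset.mem_sdiff] at h1 h2
        exact h2.2 h1.1
      rcases lt_or_ge ((g i : Fin n)) ((d i : Fin n)) with h | h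
      · exact h
      exfalso
      have hlt' : ((d i : Fin n)) < ((g i : Fin n)) := lt_of_le_of_ne h (Ne.symm hne)
      set t := ((d i : Fin n)) with ht
      have hA : (i : ℕ) + 1 ≤ ((δ \ γ).filter (· ≤ t)).card := by
        rw [← Fin.card_Iic i]
        apply Finset.card_le_card_of_injOn (fun j => ((d j : Fin n)))
        · intro j hj
          simp only [Finset.mem_coe, Finset.mem_Iic] at hj
          simp only [Finset.mem_coe, Finset.mem_filter]
          exact ⟨(d j).2, by exact_mod_cast Subtype.coe_le_coe.mpr (d.monotone hj)⟩
        · intro j1 _ j2 _ hj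
          exact d.injective (Subtype.coe_injective hj)
      have hB : ((γ \ δ).filter (· ≤ t)).card ≤ (i : ℕ) := by
        have hsub : (γ \ δ).filter (· ≤ t)
            ⊆ (Finset.Iio i).image (fun j => ((g j : Fin n))) := by
          intro x hx
          simp only [Finset.mem_filter] at hx
          obtain ⟨hx1, hx2⟩ := hx
          set j := g.symm ⟨x, hx1⟩ with hj
          have hgj : ((g j : Fin n)) = x := by
            rw [hj, g.apply_symm_apply]
          have hji : j < i := by
            have : ((g j : Fin n)) < ((g i : Fin n)) := by
              rw [hgj]; exact lt_of_le_of_lt hx2 hlt'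
            exact (g.lt_iff_lt).mp (Subtype.coe_lt_coe.mp this)
          exact Finset.mem_image.mpr ⟨j, Finset.mem_Iio.mpr hji, hgj⟩
        calc ((γ \ δ).filter (· ≤ t)).card
            ≤ ((Finset.Iio i).image (fun j => ((g j : Fin n)))).card := Finset.card_le_card hsub
          _ ≤ (Finset.Iio i).card := Finset.card_image_le
          _ = i := Fin.card_Iio i
      have := key2 t
      omega
    -- Step 4: build the bijection
    refine ⟨fun x => if h : x ∈ γ \ δ then ((d (g.symm ⟨x, h⟩) : Fin n)) else x, ⟨?_, ?_, ?_⟩, ?_⟩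
    · intro x hx
      rw [Finset.mem_coe] at hx
      simp only [dif_pos hx]
      exact Finset.mem_coe.mpr (d _).2
    · intro x hx y hy hxy
      rw [Finset.mem_coe] at hx hy
      simp only [dif_pos hx, dif_pos hy] at hxy
      have := g.symm.injective (d.injective (Subtype.coe_injective hxy))
      exact congrArg Subtype.val this
    · intro y hy
      rw [Finset.mem_coe] at hy
      set j := d.symm ⟨y, hy⟩ with hj
      refine ⟨((g j : Fin n)), Finset.mem_coe.mpr (g j).2, ?_⟩
      simp only [dif_pos (g j).2]
      have e1 : (⟨((g j : Fin n)), (g j).2⟩ : ↥(γ \ δ)) = g j := rfl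
      rw [e1, g.symm_apply_apply, hj, d.apply_symm_apply]
    · intro a ha
      simp only [dif_pos ha]
      have := key3 (g.symm ⟨a, ha⟩)
      rwa [g.apply_symm_apply] at this
  · rintro ⟨f, hbij, hlt⟩
    refine ⟨fun a b => if a ∈ γ \ δ ∧ f a = b then 1 else 0, fun x => ?_⟩
    simp only [Nat.cast_ite, Nat.cast_one, Nat.cast_zero]
    have hinner : ∀ a : Fin n, (∑ b : Fin n, if a < b then
          (if a ∈ γ \ δ ∧ f a = b then (1 : ℤ) else 0) *
            ((if x = a then (1 : ℤ) else 0) - (if x = b then (1 : ℤ) else 0))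
        else 0)
        = if a ∈ γ \ δ then
            ((if x = a then (1 : ℤ) else 0) - (if x = f a then (1 : ℤ) else 0)) else 0 := by
      intro a
      by_cases ha : a ∈ γ \ δ
      · rw [if_pos ha, Finset.sum_eq_single_of_mem (f a) (Finset.mem_univ _)]
        · rw [if_pos (hlt a ha), if_pos ⟨ha, rfl⟩]; ring
        · intro b _ hb
          split_ifs with h1 h2 <;> simp_all
      · rw [if_neg ha]
        apply Finset.sum_eq_zero
        intro b _
        split_ifs with h1 h2 <;> simp_all
    have h2 : ∑ a ∈ γ \ δ, (if x = f a then (1 : ℤ) else 0)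
        = if x ∈ δ \ γ then (1 : ℤ) else 0 := by
      by_cases hx : x ∈ δ \ γ
      · rw [if_pos hx]
        obtain ⟨a0, ha0, hfa0⟩ := hbij.2.2 (Finset.mem_coe.mpr hx)
        rw [Finset.sum_eq_single_of_mem a0 (Finset.mem_coe.mp ha0)]
        · rw [if_pos hfa0.symm]
        · intro b hb hne
          rw [if_neg]
          intro he
          exact hne (hbij.2.1 (Finset.mem_coe.mpr hb) ha0 (by rw [hfa0, ← he]))
      · rw [if_neg hx]
        apply Finset.sum_eq_zero
        intro a ha
        rw [if_neg]
        intro he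
        exact hx (Finset.mem_coe.mp (he ▸ hbij.1 (Finset.mem_coe.mpr ha)))
    rw [Finset.sum_congr rfl (fun a _ => hinner a), Finset.sum_ite_mem, Finset.univ_inter, Finset.sum_sub_distrib, Finset.sum_ite_eq, h2]
    by_cases h1 : x ∈ γ <;> by_cases hd : x ∈ δ <;> simp [h1, hd, Finset.mem_sdiff]
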